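/- Let K be an infinite compact metric space with metric d, and let X be a finite-dimensional real normed space whose dual unit ball B_{X*} has only finitely many extreme points (i.e., X is polyhedral). Then there exists a linear isometric embedding of X into C(K) whose range consists of d-Lipschitz functions. -/

import Mathlib

open NormedSpace

/-- Let `K` be an infinite compact metric space and `X` a
finite-dimensional real normed space whose dual unit ball has only finitely many extreme
points (`X` polyhedral). Then there is a linear isometric embedding of `X` into `C(K)`
whose range consists of Lipschitz functions. -/
theorem polyhedral_isometric_lipschitz_embedding
    {K : Type*} [MetricSpace K] [CompactSpace K] [Infinite K]
    {X : Type*} [NormedAddCommGroup X] [NormedSpace ℝ X] [FiniteDimensional ℝ X]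
    (hpoly : (Set.extremePoints ℝ (Metric.closedBall (0 : StrongDual ℝ X) 1)).Finite) :
    ∃ J : X →L[ℝ] C(K, ℝ), (∀ x : X, ‖J x‖ = ‖x‖) ∧
      (∀ x : X, ∃ L ≥ 0, ∀ t₁ t₂ : K, |J x t₁ - J x t₂| ≤ L * dist t₁ t₂) := by
  classical
  rcases subsingleton_or_nontrivial X with hX | hX
  · refine ⟨0, fun x => ?_, fun x => ⟨0, le_refl 0, fun t₁ t₂ => ?_⟩⟩
    · simp [Subsingleton.elim x 0]
    · simp
  set E := Set.extremePoints ℝ (Metric.closedBall (0 : StrongDual ℝ X) 1) with hE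
  set s : Finset (StrongDual ℝ X) := hpoly.toFinset with hsdef
  have hsE : (s : Set (StrongDual ℝ X)) = E := hpoly.coe_toFinset
  have hcomp : IsCompact (Metric.closedBall (0 : StrongDual ℝ X) 1) := isCompact_closedBall _ _
  have hball : Metric.closedBall (0 : StrongDual ℝ X) 1 = convexHull ℝ E := by
    have h1 := closure_convexHull_extremePoints hcomp (convex_closedBall _ _)
    have h2 : IsClosed (convexHull ℝ E) := (hpoly.isCompact_convexHull ℝ).isClosed
    rw [← h1, h2.closure_eq]
  have hmem_ball : ∀ f ∈ s, ‖f‖ ≤ 1 := by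
    intro f hf
    have : f ∈ Metric.closedBall (0 : StrongDual ℝ X) 1 := by
      have : f ∈ E := by rw [← hsE]; exact_mod_cast hf
      exact extremePoints_subset this
    simpa [mem_closedBall_zero_iff] using this
  have hs : s.Nonempty := by
    rcases s.eq_empty_or_nonempty with h | h
    · exfalso
      have hEe : E = ∅ := by rw [← hsE, h]; simp
      have h0 : (0 : StrongDual ℝ X) ∈ Metric.closedBall (0 : StrongDual ℝ X) 1 :=
        Metric.mem_closedBall_self zero_le_one
      rw [hball, hEe] at h0
      simp at h0
    · exact h
  -- norm formula
  have hnorm : ∀ x : X, ‖x‖ = s.sup' hs fun f => |f x| := by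
    intro x
    apply le_antisymm
    · obtain ⟨g, hg1, hgx⟩ := exists_dual_vector' ℝ x
      have hgmem : g ∈ Metric.closedBall (0 : StrongDual ℝ X) 1 := by
        simp [mem_closedBall_zero_iff, hg1]
      have hlin : IsLinearMap ℝ (fun f : StrongDual ℝ X => f x) :=
        ⟨fun a b => rfl, fun c a => rfl⟩
      have hsub : convexHull ℝ E ⊆ {f : StrongDual ℝ X | f x ≤ s.sup' hs fun f => |f x|} := by
        apply convexHull_min
        · intro f hf
          have hfs : f ∈ s := by rw [← hsE] at hf; exact_mod_cast hf
          exact le_trans (le_abs_self _) (Finset.le_sup' (fun f => |f x|) hfs)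
        · exact convex_halfSpace_le hlin _
      have := hsub (hball ▸ hgmem)
      calc ‖x‖ = g x := hgx.symm
        _ ≤ _ := this
    · apply Finset.sup'_le
      intro f hf
      calc |f x| = ‖f x‖ := (Real.norm_eq_abs _).symm
        _ ≤ ‖f‖ * ‖x‖ := f.le_opNorm x
        _ ≤ 1 * ‖x‖ := by gcongr; exact hmem_ball f hf
        _ = ‖x‖ := one_mul _
  -- enumeration
  set n := s.card with hn
  set F : Fin n → StrongDual ℝ X := fun i => ((s.equivFin.symm i : s) : StrongDual ℝ X) with hF
  have hFmem : ∀ i, F i ∈ s := fun i => (s.equivFin.symm i).2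
  set t : Fin n → K := fun i => Infinite.natEmbedding K (i : ℕ) with ht
  have ht_inj : Function.Injective t := by
    intro i j h
    exact Fin.val_injective ((Infinite.natEmbedding K).injective h)
  -- separation
  obtain ⟨r, hr0, hr⟩ : ∃ r > 0, ∀ i j : Fin n, i ≠ j → 2 * r ≤ dist (t i) (t j) := by
    set P := (Finset.univ : Finset (Fin n × Fin n)).filter fun p => p.1 ≠ p.2 with hP
    rcases P.eq_empty_or_nonempty with hPe | hPn
    · refine ⟨1, one_pos, fun i j hij => ?_⟩
      exfalso
      have hmem : (i, j) ∈ P := Finset.mem_filter.mpr ⟨Finset.mem_univ (i, j), hij⟩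
      rw [hPe] at hmem
      exact Finset.notMem_empty _ hmem
    · refine ⟨(P.inf' hPn fun p => dist (t p.1) (t p.2)) / 2, ?_, ?_⟩
      · apply div_pos _ two_pos
        rw [Finset.lt_inf'_iff]
        intro p hp
        have hne : p.1 ≠ p.2 := (Finset.mem_filter.mp hp).2
        exact dist_pos.mpr fun h => hne (ht_inj h)
      · intro i j hij
        have hmem : (i, j) ∈ P := Finset.mem_filter.mpr ⟨Finset.mem_univ _, hij⟩
        have := Finset.inf'_le (fun p : Fin n × Fin n => dist (t p.1) (t p.2)) hmem
        linarith
  set φ : Fin n → K → ℝ := fun i τ => max (1 - dist τ (t i) / r) 0 with hφ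
  have hφ_nonneg : ∀ i τ, 0 ≤ φ i τ := fun i τ => le_max_right _ _
  have hφ_le_one : ∀ i τ, φ i τ ≤ 1 := by
    intro i τ
    apply max_le _ zero_le_one
    have : 0 ≤ dist τ (t i) / r := div_nonneg dist_nonneg hr0.le
    linarith
  have hφ_self : ∀ i, φ i (t i) = 1 := by
    intro i; simp [hφ]
  have hφ_small : ∀ i τ, φ i τ ≠ 0 → dist τ (t i) < r := by
    intro i τ h
    by_contra hge
    push_neg at hge
    apply h
    have : 1 - dist τ (t i) / r ≤ 0 := by
      have := (one_le_div hr0).mpr hge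
      linarith
    simp [hφ, max_eq_right this]
  have hφ_disj : ∀ i j τ, i ≠ j → φ i τ ≠ 0 → φ j τ = 0 := by
    intro i j τ hij hi
    by_contra hj
    have h1 := hφ_small i τ hi
    have h2 := hφ_small j τ hj
    have h3 := hr i j hij
    have : dist (t i) (t j) ≤ dist τ (t i) + dist τ (t j) := by
      calc dist (t i) (t j) ≤ dist (t i) τ + dist τ (t j) := dist_triangle _ _ _
        _ = dist τ (t i) + dist τ (t j) := by rw [dist_comm]
    linarith
  have hφ_ne : ∀ i j, i ≠ j → φ i (t j) = 0 := by
    intro i j hij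
    exact hφ_disj j i (t j) hij.symm (by rw [hφ_self]; norm_num)
  have hφ_lip : ∀ i (τ₁ τ₂ : K), |φ i τ₁ - φ i τ₂| ≤ dist τ₁ τ₂ / r := by
    intro i τ₁ τ₂
    calc |φ i τ₁ - φ i τ₂| ≤ |(1 - dist τ₁ (t i) / r) - (1 - dist τ₂ (t i) / r)| :=
          abs_max_sub_max_le_abs _ _ _
      _ = |dist τ₂ (t i) - dist τ₁ (t i)| / r := by
          have h1 : 1 - dist τ₁ (t i) / r - (1 - dist τ₂ (t i) / r)
              = (dist τ₂ (t i) - dist τ₁ (t i)) / r := by field_simp; ring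
          rw [h1, abs_div, abs_of_pos hr0]
      _ ≤ dist τ₂ τ₁ / r := by
          gcongr
          exact abs_dist_sub_le _ _ _
      _ = dist τ₁ τ₂ / r := by rw [dist_comm]
  have hφ_cont : ∀ i, Continuous (φ i) := by
    intro i
    apply Continuous.max _ continuous_const
    exact continuous_const.sub ((continuous_id.dist continuous_const).div_const r)
  have hsum_le_one : ∀ τ : K, ∑ i, φ i τ ≤ 1 := by
    intro τ
    by_cases hall : ∀ i, φ i τ = 0
    · simp [hall]
    · push_neg at hall
      obtain ⟨i₀, hi₀⟩ := hall
      have : ∑ i, φ i τ = φ i₀ τ := by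
        apply Finset.sum_eq_single i₀
        · intro i _ hne
          exact hφ_disj i₀ i τ (Ne.symm hne) hi₀
        · intro h; exact absurd (Finset.mem_univ _) h
      rw [this]; exact hφ_le_one i₀ τ
  -- the linear map
  set Jlin : X →ₗ[ℝ] C(K, ℝ) :=
    { toFun := fun x => ⟨fun τ => ∑ i, φ i τ * F i x, by
        exact continuous_finset_sum _ fun i _ => (hφ_cont i).mul continuous_const⟩
      map_add' := by
        intro a b; ext τ
        simp [mul_add, Finset.sum_add_distrib]
      map_smul' := by
        intro c a; ext τ
        simp only [ContinuousMap.coe_mk, map_smul, smul_eq_mul, RingHom.id_apply,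
          ContinuousMap.coe_smul, Pi.smul_apply, Finset.mul_sum]
        exact Finset.sum_congr rfl fun i _ => by ring } with hJlin
  refine ⟨LinearMap.toContinuousLinearMap Jlin, ?_, ?_⟩
  · intro x
    have hFx : ∀ i, |F i x| ≤ ‖x‖ := by
      intro i
      calc |F i x| = ‖F i x‖ := (Real.norm_eq_abs _).symm
        _ ≤ ‖F i‖ * ‖x‖ := (F i).le_opNorm x
        _ ≤ 1 * ‖x‖ := by gcongr; exact hmem_ball _ (hFmem i)
        _ = ‖x‖ := one_mul _
    apply le_antisymm
    · rw [ContinuousMap.norm_le _ (norm_nonneg x)]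
      intro τ
      show ‖∑ i, φ i τ * F i x‖ ≤ ‖x‖
      rw [Real.norm_eq_abs]
      calc |∑ i, φ i τ * F i x| ≤ ∑ i, |φ i τ * F i x| := Finset.abs_sum_le_sum_abs _ _
        _ = ∑ i, φ i τ * |F i x| := by
            refine Finset.sum_congr rfl fun i _ => ?_
            rw [abs_mul, abs_of_nonneg (hφ_nonneg i τ)]
        _ ≤ ∑ i, φ i τ * ‖x‖ := by
            apply Finset.sum_le_sum
            intro i _
            exact mul_le_mul_of_nonneg_left (hFx i) (hφ_nonneg i τ)
        _ = (∑ i, φ i τ) * ‖x‖ := (Finset.sum_mul _ _ _).symm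
        _ ≤ 1 * ‖x‖ := mul_le_mul_of_nonneg_right (hsum_le_one τ) (norm_nonneg x)
        _ = ‖x‖ := one_mul _
    · obtain ⟨f₀, hf₀s, hf₀⟩ := Finset.exists_mem_eq_sup' hs (fun f => |f x|)
      set i₀ := s.equivFin ⟨f₀, hf₀s⟩ with hi₀
      have hFi₀ : F i₀ = f₀ := by simp [hF, hi₀]
      have hJt : (LinearMap.toContinuousLinearMap Jlin x) (t i₀) = F i₀ x := by
        show (∑ i, φ i (t i₀) * F i x) = F i₀ x
        rw [Finset.sum_eq_single i₀]
        · rw [hφ_self, one_mul]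
        · intro i _ hne
          rw [hφ_ne i i₀ hne, zero_mul]
        · intro h; exact absurd (Finset.mem_univ _) h
      calc ‖x‖ = |f₀ x| := by rw [hnorm x, hf₀]
        _ = ‖(LinearMap.toContinuousLinearMap Jlin x) (t i₀)‖ := by
            rw [hJt, hFi₀, Real.norm_eq_abs]
        _ ≤ ‖LinearMap.toContinuousLinearMap Jlin x‖ :=
            ContinuousMap.norm_coe_le_norm _ _
  · intro x
    refine ⟨(∑ i, |F i x|) / r, by positivity, fun τ₁ τ₂ => ?_⟩
    show |(∑ i, φ i τ₁ * F i x) - ∑ i, φ i τ₂ * F i x| ≤ _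
    rw [← Finset.sum_sub_distrib]
    calc |∑ i, (φ i τ₁ * F i x - φ i τ₂ * F i x)| 
        ≤ ∑ i, |φ i τ₁ * F i x - φ i τ₂ * F i x| := Finset.abs_sum_le_sum_abs _ _
      _ = ∑ i, |φ i τ₁ - φ i τ₂| * |F i x| := by
          refine Finset.sum_congr rfl fun i _ => ?_
          rw [← sub_mul, abs_mul]
      _ ≤ ∑ i, (dist τ₁ τ₂ / r) * |F i x| := by
          apply Finset.sum_le_sum
          intro i _
          exact mul_le_mul_of_nonneg_right (hφ_lip i τ₁ τ₂) (abs_nonneg _)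
      _ = (∑ i, |F i x|) / r * dist τ₁ τ₂ := by
          rw [Finset.sum_div, Finset.sum_mul]
          exact Finset.sum_congr rfl fun i _ => by ring
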